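/- If W : 𝕂 → ℝ is a continuous fixed point of 𝓡 on 𝕂, then for i, j ∈ {0,1}: W(i·ρ_j) = W(i·ī·ρ_j) + W(ī·ρ_j); consequently W(01ρ_j) + W(10ρ_j) = 0. -/

import Mathlib

open Filter Topology MeasureTheory

/-- The left shift on the full 2-shift `Σ = {0,1}^ℕ`. -/
def shift (x : ℕ → Bool) : ℕ → Bool := fun n => x (n + 1)

/-- The Thue–Morse substitution `H : 0 → 01, 1 → 10`, acting on sequences. -/
def subH (x : ℕ → Bool) : ℕ → Bool :=
  fun n => if n % 2 = 0 then x (n / 2) else !x (n / 2)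

/-- The Thue–Morse sequence: `tm n` is the parity of the number of 1s in
the binary expansion of `n`. -/
def tm (n : ℕ) : Bool := (Nat.digits 2 n).count 1 % 2 == 1

/-- The fixed point of `subH` starting with 0. -/
def rho0 : ℕ → Bool := tm

/-- The fixed point of `subH` starting with 1. -/
def rho1 : ℕ → Bool := fun n => !tm n

/-- `rhoB b` is the fixed point of `subH` starting with digit `b`. -/
def rhoB : Bool → ℕ → Bool
  | false => rho0
  | true => rho1

/-- The digit-flipping involution. -/
def flipSeq (x : ℕ → Bool) : ℕ → Bool := fun n => !x n

/-- Prepend a digit to a sequence. -/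
def consTM (a : Bool) (x : ℕ → Bool) : ℕ → Bool
  | 0 => a
  | n + 1 => x n

/-- The Thue–Morse subshift: the closure of the shift orbit of `rho0`. -/
def TMK : Set (ℕ → Bool) := closure {y | ∃ n, y = shift^[n] rho0}

/-- The renormalization operator `𝓡V = V ∘ σ ∘ H + V ∘ H`. -/
def RenOp (V : (ℕ → Bool) → ℝ) : (ℕ → Bool) → ℝ :=
  fun x => V (shift (subH x)) + V (subH x)

/-- The Birkhoff sum `S_k V = ∑_{i<k} V ∘ σⁱ`. -/
def birkhoff (V : (ℕ → Bool) → ℝ) (k : ℕ) (x : ℕ → Bool) : ℝ :=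
  ∑ i ∈ Finset.range k, V (shift^[i] x)

/-- The potential `U_c`: value `c` on `[01]`, `-c` on `[10]`, `0` on `[00] ∪ [11]`. -/
def Upot (c : ℝ) (x : ℕ → Bool) : ℝ :=
  if x 0 = false ∧ x 1 = true then c
  else if x 0 = true ∧ x 1 = false then -c else 0

/-- The sliding block code `π(x)_k = 1` iff `x_k ≠ x_{k+1}`. -/
def piTM (x : ℕ → Bool) : ℕ → Bool := fun n => x n != x (n + 1)

/-- The Feigenbaum substitution `0 → 11, 1 → 10`, acting on sequences. -/
def subHfeig (x : ℕ → Bool) : ℕ → Bool :=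
  fun n => if n % 2 = 0 then true else !x (n / 2)

section Aux

lemma tm_zero : tm 0 = false := by simp [tm]

lemma tm_two_mul (n : ℕ) : tm (2 * n) = tm n := by
  rcases Nat.eq_zero_or_pos n with rfl | h
  · simp
  · unfold tm
    rw [Nat.digits_def' (by norm_num : (1:ℕ) < 2) (by omega)]
    have h1 : 2 * n % 2 = 0 := by omega
    have h2 : 2 * n / 2 = n := by omega
    rw [h1, h2]
    simp

lemma tm_two_mul_add_one (n : ℕ) : tm (2 * n + 1) = !tm n := by
  unfold tm
  rw [Nat.digits_def' (by norm_num : (1:ℕ) < 2) (by omega)]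
  have h1 : (2 * n + 1) % 2 = 1 := by omega
  have h2 : (2 * n + 1) / 2 = n := by omega
  rw [h1, h2, List.count_cons_self]
  rcases Nat.mod_two_eq_zero_or_one ((Nat.digits 2 n).count 1) with h | h <;>
    simp [Nat.add_mod, h]

lemma tm_one : tm 1 = true := by
  have := tm_two_mul_add_one 0; simpa [tm_zero] using this
lemma tm_two : tm 2 = true := by
  have := tm_two_mul 1; simpa [tm_one] using this
lemma tm_three : tm 3 = false := by
  have := tm_two_mul_add_one 1; simpa [tm_one] using this
lemma tm_five : tm 5 = false := by
  have := tm_two_mul_add_one 2; simpa [tm_two] using this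
lemma tm_six : tm 6 = false := by
  have := tm_two_mul 3; simpa [tm_three] using this

lemma tm_split : ∀ (m a b : ℕ), b < 2 ^ m → tm (a * 2 ^ m + b) = xor (tm a) (tm b)
  | 0, a, b, h => by
      interval_cases b
      simp [tm_zero]
  | (m + 1), a, b, h => by
      have hp : (2:ℕ) ^ (m + 1) = 2 * 2 ^ m := by ring
      have hb : b / 2 < 2 ^ m := by omega
      have ihx := tm_split m a (b / 2) hb
      rcases Nat.mod_two_eq_zero_or_one b with hb2 | hb2
      · have e : a * 2 ^ (m + 1) + b = 2 * (a * 2 ^ m + b / 2) := by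
          have h2 : a * 2 ^ (m+1) = 2 * (a * 2 ^ m) := by ring
          omega
        have eb : tm b = tm (b / 2) := by
          conv_lhs => rw [show b = 2 * (b / 2) by omega]
          rw [tm_two_mul]
        rw [e, tm_two_mul, ihx, eb]
      · have e : a * 2 ^ (m + 1) + b = 2 * (a * 2 ^ m + b / 2) + 1 := by
          have h2 : a * 2 ^ (m+1) = 2 * (a * 2 ^ m) := by ring
          omega
        have eb : tm b = !tm (b / 2) := by
          conv_lhs => rw [show b = 2 * (b / 2) + 1 by omega]
          rw [tm_two_mul_add_one]
        rw [e, tm_two_mul_add_one, ihx, eb]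
        cases tm a <;> cases tm (b / 2) <;> rfl

lemma shift_iter (n : ℕ) (x : ℕ → Bool) (t : ℕ) : shift^[n] x t = x (t + n) := by
  induction n generalizing x with
  | zero => rfl
  | succ n ih =>
      rw [Function.iterate_succ_apply, ih]
      simp [shift]; ring_nf

lemma subH_rhoB (j : Bool) : subH (rhoB j) = rhoB j := by
  have key : ∀ n, subH tm n = tm n := by
    intro n
    unfold subH
    rcases Nat.mod_two_eq_zero_or_one n with h | h
    · rw [if_pos h]
      conv_rhs => rw [show n = 2 * (n / 2) by omega]
      rw [tm_two_mul]
    · rw [if_neg (by omega)]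
      conv_rhs => rw [show n = 2 * (n / 2) + 1 by omega]
      rw [tm_two_mul_add_one]
  cases j
  · funext n; exact key n
  · funext n
    show subH (fun k => !tm k) n = !tm n
    unfold subH
    rcases Nat.mod_two_eq_zero_or_one n with h | h
    · rw [if_pos h]
      conv_rhs => rw [show n = 2 * (n / 2) by omega]
      rw [tm_two_mul]
    · rw [if_neg (by omega)]
      conv_rhs => rw [show n = 2 * (n / 2) + 1 by omega]
      rw [tm_two_mul_add_one, Bool.not_not]

lemma subH_cons (a : Bool) (x : ℕ → Bool) :
    subH (consTM a x) = consTM a (consTM (!a) (subH x)) := by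
  funext n
  match n with
  | 0 => rfl
  | 1 => rfl
  | (n + 2) =>
      show subH (consTM a x) (n + 2) = subH x n
      unfold subH
      have h1 : (n + 2) % 2 = n % 2 := by omega
      have h2 : (n + 2) / 2 = n / 2 + 1 := by omega
      rw [h1, h2]
      rfl

lemma shift_cons (a : Bool) (x : ℕ → Bool) : shift (consTM a x) = x := by
  funext n; rfl

def pickK : Bool → Bool → ℕ
  | false, false => 5
  | false, true => 0
  | true, false => 2
  | true, true => 1

lemma tm_pickK (a b : Bool) : tm (pickK a b) = a ∧ tm (pickK a b + 1) = b := by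
  cases a <;> cases b <;>
    simp [pickK, tm_zero, tm_one, tm_two, tm_three, tm_five, tm_six]

lemma rhoB_eq (j : Bool) (s : ℕ) : rhoB j s = xor j (tm s) := by
  cases j <;> simp [rhoB, rho0, rho1]

lemma cons_mem (i j : Bool) : consTM i (rhoB j) ∈ TMK := by
  unfold TMK
  apply mem_closure_of_tendsto
    (f := fun m => shift^[pickK (xor i (tm (2 ^ m - 1))) j * 2 ^ m + (2 ^ m - 1)] rho0)
    (b := Filter.atTop)
  · rw [tendsto_pi_nhds]
    intro t
    apply Filter.Tendsto.congr' _ tendsto_const_nhds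
    filter_upwards [Filter.eventually_ge_atTop t] with m hm
    have htm : t < 2 ^ m := lt_of_le_of_lt hm (Nat.lt_two_pow_self (n := m))
    have h1 : 1 ≤ 2 ^ m := Nat.one_le_two_pow
    set k : ℕ := pickK (xor i (tm (2 ^ m - 1))) j with hk
    have hk1 : tm k = xor i (tm (2 ^ m - 1)) := (tm_pickK _ _).1
    have hk2 : tm (k + 1) = j := (tm_pickK _ _).2
    show consTM i (rhoB j) t = shift^[k * 2 ^ m + (2 ^ m - 1)] rho0 t
    rw [shift_iter]
    match t, htm with
    | 0, htm =>
        show i = tm (0 + (k * 2 ^ m + (2 ^ m - 1)))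
        rw [Nat.zero_add, tm_split m k (2 ^ m - 1) (by omega), hk1]
        cases i <;> cases tm (2 ^ m - 1) <;> rfl
    | (s + 1), htm =>
        show rhoB j s = tm (s + 1 + (k * 2 ^ m + (2 ^ m - 1)))
        have he : s + 1 + (k * 2 ^ m + (2 ^ m - 1)) = (k + 1) * 2 ^ m + s := by
          have h2 : (k + 1) * 2 ^ m = k * 2 ^ m + 2 ^ m := by ring
          omega
        rw [he, tm_split m (k + 1) s (by omega), hk2, rhoB_eq]
  · exact Filter.Eventually.of_forall fun m =>
      ⟨pickK (xor i (tm (2 ^ m - 1))) j * 2 ^ m + (2 ^ m - 1), rfl⟩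

end Aux

/-- a continuous fixed point `W` of `𝓡` on `𝕂` satisfies
`W(i·ρ_j) = W(i·ī·ρ_j) + W(ī·ρ_j)` and `W(01ρ_j) + W(10ρ_j) = 0`. -/
theorem stmt10 (W : (ℕ → Bool) → ℝ) (hW : ContinuousOn W TMK)
    (hfix : ∀ x ∈ TMK, W x = W (subH x) + W (shift (subH x))) :
    (∀ i j : Bool, W (consTM i (rhoB j)) =
      W (consTM i (consTM (!i) (rhoB j))) + W (consTM (!i) (rhoB j))) ∧
    (∀ j : Bool, W (consTM false (consTM true (rhoB j))) +
      W (consTM true (consTM false (rhoB j))) = 0) := by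
  have part1 : ∀ i j : Bool, W (consTM i (rhoB j)) =
      W (consTM i (consTM (!i) (rhoB j))) + W (consTM (!i) (rhoB j)) := by
    intro i j
    have h := hfix _ (cons_mem i j)
    rw [subH_cons, subH_rhoB, shift_cons] at h
    exact h
  refine ⟨part1, fun j => ?_⟩
  have h0 := part1 false j
  have h1 := part1 true j
  simp only [Bool.not_false, Bool.not_true] at h0 h1
  linarith
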